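/- arXiv:0811.3418 — 2 statements merged into one kernel-verified Lean document; each statement's English description precedes it below -/
import Mathlib

section
/- Let k be a field of characteristic zero and let h be a nonzero irreducible formal power series in k[[x_1,...,x_n]] that is not a unit. Then h does not divide all of its partial derivatives; i.e., there exists some i with 1 ≤ i ≤ n such that h does not divide ∂h/∂x_i. -/
open MvPowerSeries

/-- Formal partial derivative of a multivariate power series with respect to `x i`. -/
noncomputable def pderiv {n : ℕ} {k : Type} [CommRing k] (i : Fin n)
    (f : MvPowerSeries (Fin n) k) : MvPowerSeries (Fin n) k :=
  fun m => (m i + 1 : ℕ) • f (m + Finsupp.single i 1)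

/-- The gradient ideal of `f`: generated by all partial derivatives of `f`. -/
noncomputable def gradIdeal {n : ℕ} {k : Type} [CommRing k]
    (f : MvPowerSeries (Fin n) k) : Ideal (MvPowerSeries (Fin n) k) :=
  Ideal.span (Set.range fun i => pderiv i f)

/-- The Jacobian ideal of `f`: generated by `f` and all its partial derivatives. -/
noncomputable def jacIdeal {n : ℕ} {k : Type} [CommRing k]
    (f : MvPowerSeries (Fin n) k) : Ideal (MvPowerSeries (Fin n) k) :=
  Ideal.span (insert f (Set.range fun i => pderiv i f))

/-- A commutative ring is a regular local ring if it is local and its maximal ideal can be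
generated by as many elements as its Krull dimension. -/
def IsRegularLocal (R : Type) [CommRing R] : Prop :=
  ∃ _ : IsLocalRing R, ∃ s : Finset R,
    Ideal.span (s : Set R) = IsLocalRing.maximalIdeal R ∧
    (s.card : WithBot ℕ∞) = ringKrullDim R

theorem stmt_0 {k : Type} [Field k] [CharZero k] {n : ℕ}
    (h : MvPowerSeries (Fin n) k) (h0 : h ≠ 0) (hirr : Irreducible h)
    (hnu : ¬ IsUnit h) :
    ∃ i : Fin n, ¬ h ∣ pderiv i h := by
  classical
  by_contra hc
  push_neg at hc
  -- existence of minimal degree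
  have hex : ∃ d : ℕ, ∃ m : Fin n →₀ ℕ, (∑ j, m j) = d ∧ h m ≠ 0 := by
    by_contra hex
    push_neg at hex
    apply h0
    ext m
    rw [map_zero]; exact hex (∑ j, m j) m rfl
  set d := Nat.find hex with hd
  obtain ⟨m, hmd, hm0⟩ := Nat.find_spec hex
  rw [← hd] at hmd
  have hmin : ∀ m' : Fin n →₀ ℕ, (∑ j, m' j) < d → h m' = 0 := by
    intro m' hlt
    by_contra hne
    exact Nat.find_min hex hlt ⟨m', rfl, hne⟩
  have hd1 : 1 ≤ d := by
    rcases Nat.eq_zero_or_pos d with h00 | h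
    · exfalso
      apply hnu
      rw [MvPowerSeries.isUnit_iff_constantCoeff]
      have hm : m = 0 := by
        ext j
        have := Finset.sum_eq_zero_iff.mp (hmd.trans h00) j (Finset.mem_univ j)
        simpa using this
      rw [hm] at hm0
      exact (IsUnit.mk0 _ hm0)
    · exact h
  -- pick i with m i ≥ 1
  have hi : ∃ i, m i ≠ 0 := by
    by_contra hall
    push_neg at hall
    have : (∑ j, m j) = 0 := Finset.sum_eq_zero fun j _ => hall j
    omega
  obtain ⟨i, hmi⟩ := hi
  obtain ⟨g, hg⟩ := hc i
  set m' : Fin n →₀ ℕ := m - Finsupp.single i 1 with hm'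
  have hadd : m' + Finsupp.single i 1 = m := by
    ext j
    simp only [Finsupp.coe_add, Pi.add_apply, Finsupp.coe_tsub, Pi.sub_apply, hm']
    rcases eq_or_ne j i with rfl | hji
    · simp; omega
    · simp [Finsupp.single_apply, Ne.symm hji]
  have hm'd : (∑ j, m' j) = d - 1 := by
    have h1 : (∑ j, m j) = (∑ j, m' j) + (∑ j, (Finsupp.single i 1 : Fin n →₀ ℕ) j) := by
      rw [← Finset.sum_add_distrib]
      apply Finset.sum_congr rfl
      intro j _
      rw [← Finsupp.add_apply, hadd]
    have h2 : (∑ j, (Finsupp.single i 1 : Fin n →₀ ℕ) j) = 1 := by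
      simp [Finsupp.single_apply]
    omega
  -- evaluate both sides at m'
  have key : pderiv i h m' = 0 := by
    have : pderiv i h m' = MvPowerSeries.coeff m' (h * g) := by
      rw [← hg]; rfl
    rw [this, MvPowerSeries.coeff_mul]
    apply Finset.sum_eq_zero
    rintro ⟨a, b⟩ hab
    rw [Finset.HasAntidiagonal.mem_antidiagonal] at hab
    have ha : (∑ j, a j) < d := by
      have hle : ∀ j, a j ≤ m' j := by
        intro j
        have := congrArg (fun f => f j) hab
        simp only [Finsupp.coe_add, Pi.add_apply] at this
        omega
      have : (∑ j, a j) ≤ (∑ j, m' j) := Finset.sum_le_sum fun j _ => hle j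
      omega
    have : MvPowerSeries.coeff a h = 0 := hmin a ha
    rw [this, zero_mul]
  have key2 : pderiv i h m' = (m i : k) * h m := by
    show ((m' i + 1 : ℕ) • h (m' + Finsupp.single i 1)) = _
    rw [hadd, nsmul_eq_mul]
    congr 1
    have : m' i + 1 = m i := by
      have := congrArg (fun f => f i) hadd
      simp only [Finsupp.coe_add, Pi.add_apply, Finsupp.single_apply, if_pos rfl] at this
      exact_mod_cast this
    exact_mod_cast congrArg (Nat.cast : ℕ → k) this
  rw [key2] at key
  rcases mul_eq_zero.mp key with hk | hk
  · exact hmi (Nat.cast_eq_zero.mp hk)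
  · exact hm0 hk
end

section
/- Let k be a field of characteristic zero and f ∈ k[[x_1,...,x_n]] a non-unit whose gradient ideal I_{∇f} = (∂f/∂x_1, ..., ∂f/∂x_n) is principal, generated by ∂f/∂x_1 ≠ 0. Then f ∈ (∂f/∂x_1). -/
open MvPowerSeries

namespace GradAux
variable {k : Type} [Field k] {n : ℕ}

local notation "S" => MvPowerSeries (Fin (n+1)) k
local notation "σ" => (Fin (n+1) →₀ ℕ)

/-- weight in the variables other than 0 -/
def w (m : Fin (n+1) →₀ ℕ) : ℕ := ∑ j ∈ Finset.univ.erase 0, m j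

/-- total degree -/
def deg (m : Fin (n+1) →₀ ℕ) : ℕ := ∑ j, m j

lemma w_add (m u : σ) : w (m + u) = w m + w u := by
  simp [w, Finsupp.add_apply, Finset.sum_add_distrib]

lemma deg_add (m u : σ) : deg (m + u) = deg m + deg u := by
  simp [deg, Finsupp.add_apply, Finset.sum_add_distrib]

lemma w_single_zero (a : ℕ) : w (Finsupp.single (0 : Fin (n+1)) a) = 0 := by
  apply Finset.sum_eq_zero
  intro j hj
  rcases Finset.mem_erase.mp hj with ⟨hj0, _⟩
  simp [Finsupp.single_apply, Ne.symm hj0]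

lemma w_single {i : Fin (n+1)} (hi : i ≠ 0) (a : ℕ) : w (Finsupp.single i a) = a := by
  rw [w, Finset.sum_eq_single i]
  · simp
  · intro j hj hji; simp [Finsupp.single_apply, Ne.symm hji]
  · intro h; exact absurd (Finset.mem_erase.mpr ⟨hi, Finset.mem_univ i⟩) h

lemma eq_single_of_w_eq_zero {m : σ} (h : w m = 0) : m = Finsupp.single 0 (m 0) := by
  ext j
  rcases eq_or_ne j 0 with rfl | hj
  · simp
  · have hmj : m j = 0 :=
      (Finset.sum_eq_zero_iff).mp h j (Finset.mem_erase.mpr ⟨hj, Finset.mem_univ j⟩)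
    simp [Finsupp.single_apply, Ne.symm hj, hmj]

lemma exists_ne_zero_of_w_ne_zero {m : σ} (h : w m ≠ 0) : ∃ i : Fin (n+1), i ≠ 0 ∧ m i ≠ 0 := by
  by_contra hc
  push_neg at hc
  exact h (Finset.sum_eq_zero fun j hj => hc j (Finset.mem_erase.mp hj).1)

lemma deg_eq_zero_iff {m : σ} : deg m = 0 ↔ m = 0 := by
  constructor
  · intro h; ext j
    exact (Finset.sum_eq_zero_iff).mp h j (Finset.mem_univ j)
  · rintro rfl; simp [deg]

lemma fadd_sub_cancel (m : σ) (i : Fin (n+1)) : m + Finsupp.single i 1 - Finsupp.single i 1 = m := by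
  ext j; simp [Finsupp.tsub_apply, Finsupp.add_apply]

lemma fsub_add_cancel {m : σ} {i : Fin (n+1)} (h : m i ≠ 0) :
    m - Finsupp.single i 1 + Finsupp.single i 1 = m := by
  ext j
  rcases eq_or_ne j i with rfl | hj
  · simp only [Finsupp.add_apply, Finsupp.tsub_apply, Finsupp.single_apply, if_pos rfl, if_true]
    omega
  · simp [Finsupp.tsub_apply, Finsupp.single_apply, Ne.symm hj]

lemma fsub_apply_self (m : σ) (i : Fin (n+1)) :
    ((m - Finsupp.single i 1 : σ)) i = m i - 1 := by
  simp [Finsupp.tsub_apply]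

lemma fsub_apply_ne {m : σ} {i j : Fin (n+1)} (h : j ≠ i) :
    ((m - Finsupp.single i 1 : σ)) j = m j := by
  simp [Finsupp.tsub_apply, Finsupp.single_apply, Ne.symm h]

lemma mul_apply (p q : S) (m : σ) :
    (p * q) m = ∑ x ∈ Finset.HasAntidiagonal.antidiagonal m, p x.1 * q x.2 := by
  classical
  simpa [MvPowerSeries.coeff_apply] using MvPowerSeries.coeff_mul m p q

lemma pd_apply (i : Fin (n+1)) (p : S) (m : σ) :
    pderiv i p m = ((m i + 1 : ℕ) : k) * p (m + Finsupp.single i 1) := by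
  simp [_root_.pderiv, nsmul_eq_mul]

lemma pd_add (i : Fin (n+1)) (p q : S) : pderiv i (p + q) = pderiv i p + pderiv i q := by
  funext m
  show (m i + 1 : ℕ) • ((p + q) (m + Finsupp.single i 1)) = _
  rw [show (p + q) (m + Finsupp.single i 1)
      = p (m + Finsupp.single i 1) + q (m + Finsupp.single i 1) from rfl]
  rw [show (pderiv i p + pderiv i q) m = pderiv i p m + pderiv i q m from rfl]
  simp [_root_.pderiv, smul_add]

lemma pd_sub (i : Fin (n+1)) (p q : S) : pderiv i (p - q) = pderiv i p - pderiv i q := by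
  funext m
  show (m i + 1 : ℕ) • ((p - q) (m + Finsupp.single i 1)) = _
  rw [show (p - q) (m + Finsupp.single i 1)
      = p (m + Finsupp.single i 1) - q (m + Finsupp.single i 1) from rfl]
  rw [show (pderiv i p - pderiv i q) m = pderiv i p m - pderiv i q m from rfl]
  simp [_root_.pderiv, smul_sub]

lemma pd_comm (i j : Fin (n+1)) (p : S) : pderiv i (pderiv j p) = pderiv j (pderiv i p) := by
  funext m
  rw [pd_apply, pd_apply, pd_apply, pd_apply]
  have h1 : m + Finsupp.single i 1 + Finsupp.single j 1 =
      m + Finsupp.single j 1 + Finsupp.single i 1 := by abel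
  rw [h1]
  rcases eq_or_ne i j with rfl | hij
  · ring
  · have h2 : ((m + Finsupp.single i 1 : σ)) j = m j := by
      simp [Finsupp.add_apply, Finsupp.single_apply, hij]
    have h3 : ((m + Finsupp.single j 1 : σ)) i = m i := by
      simp [Finsupp.add_apply, Finsupp.single_apply, Ne.symm hij]
    rw [h2, h3]; ring

lemma sum_swap_antidiagonal (M : σ) (F : σ → σ → k) :
    ∑ x ∈ Finset.HasAntidiagonal.antidiagonal M, F x.1 x.2 = ∑ x ∈ Finset.HasAntidiagonal.antidiagonal M, F x.2 x.1 := by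
  apply Finset.sum_nbij' (fun x => Prod.swap x) (fun x => Prod.swap x)
  · intro a ha
    rw [Finset.HasAntidiagonal.mem_antidiagonal] at ha ⊢
    rw [← ha]; exact add_comm _ _
  · intro a ha
    rw [Finset.HasAntidiagonal.mem_antidiagonal] at ha ⊢
    rw [← ha]; exact add_comm _ _
  · intro a _; rfl
  · intro a _; rfl
  · intro a _; rfl

lemma sum_shift (i : Fin (n+1)) (m : σ) (F : σ → σ → k) :
    ∑ x ∈ Finset.HasAntidiagonal.antidiagonal (m + Finsupp.single i 1 : σ), ((x.1 i : ℕ) : k) * F x.1 x.2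
      = ∑ y ∈ Finset.HasAntidiagonal.antidiagonal m, ((y.1 i + 1 : ℕ) : k) * F (y.1 + Finsupp.single i 1) y.2 := by
  classical
  rw [← Finset.sum_filter_of_ne
    (p := fun x : (Fin (n+1) →₀ ℕ) × (Fin (n+1) →₀ ℕ) => x.1 i ≠ 0)
    (by intro x _ hx h0; exact hx (by simp [h0]))]
  apply Finset.sum_nbij' (fun x => (x.1 - Finsupp.single i 1, x.2))
    (fun y => (y.1 + Finsupp.single i 1, y.2))
  · rintro ⟨a, b⟩ ha
    rw [Finset.mem_filter, Finset.HasAntidiagonal.mem_antidiagonal] at ha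
    rw [Finset.HasAntidiagonal.mem_antidiagonal]
    obtain ⟨hab, hai⟩ := ha
    simp only at hai
    ext j
    have hco := DFunLike.congr_fun hab j
    simp only [Finsupp.add_apply, Finsupp.tsub_apply, Finsupp.single_apply] at hco ⊢
    rcases eq_or_ne i j with rfl | hij
    · simp only [if_pos rfl, if_true] at hco ⊢
      have hai' : a i ≠ 0 := hai
      omega
    · simp only [if_neg hij] at hco ⊢; omega
  · rintro ⟨a, b⟩ ha
    rw [Finset.HasAntidiagonal.mem_antidiagonal] at ha
    rw [Finset.mem_filter, Finset.HasAntidiagonal.mem_antidiagonal]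
    constructor
    · simp only
      rw [← ha]; abel
    · simp [Finsupp.add_apply]
  · rintro ⟨a, b⟩ ha
    rw [Finset.mem_filter] at ha
    have hai : a i ≠ 0 := ha.2
    have : a - Finsupp.single i 1 + Finsupp.single i 1 = a := fsub_add_cancel hai
    simp [this]
  · rintro ⟨a, b⟩ _
    simp [fadd_sub_cancel]
  · rintro ⟨a, b⟩ ha
    rw [Finset.mem_filter] at ha
    have hai : a i ≠ 0 := ha.2
    have h1 : ((a - Finsupp.single i 1 : σ)) i + 1 = a i := by
      rw [fsub_apply_self]; omega
    simp only
    rw [fsub_add_cancel hai, h1]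

lemma pd_mul (i : Fin (n+1)) (p q : S) :
    pderiv i (p * q) = pderiv i p * q + p * pderiv i q := by
  classical
  funext m
  have hL : pderiv i (p * q) m
      = ∑ x ∈ Finset.HasAntidiagonal.antidiagonal (m + Finsupp.single i 1 : σ),
          ((m i + 1 : ℕ) : k) * (p x.1 * q x.2) := by
    rw [pd_apply, mul_apply, Finset.mul_sum]
  have key : ∀ x ∈ Finset.HasAntidiagonal.antidiagonal (m + Finsupp.single i 1 : σ),
      ((m i + 1 : ℕ) : k) * (p x.1 * q x.2)
        = ((x.1 i : ℕ) : k) * (p x.1 * q x.2) + ((x.2 i : ℕ) : k) * (p x.1 * q x.2) := by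
    intro x hx
    rw [Finset.HasAntidiagonal.mem_antidiagonal] at hx
    have hxi : x.1 i + x.2 i = m i + 1 := by
      have := DFunLike.congr_fun hx i
      simpa [Finsupp.add_apply, Finsupp.single_apply] using this
    rw [← hxi]; push_cast; ring
  rw [hL, Finset.sum_congr rfl key, Finset.sum_add_distrib]
  have e1 : ∑ x ∈ Finset.HasAntidiagonal.antidiagonal (m + Finsupp.single i 1 : σ),
      ((x.1 i : ℕ) : k) * (p x.1 * q x.2) = (pderiv i p * q) m := by
    rw [sum_shift i m (fun a b => p a * q b), mul_apply]
    apply Finset.sum_congr rfl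
    intro y _
    rw [pd_apply]; ring
  have e2 : ∑ x ∈ Finset.HasAntidiagonal.antidiagonal (m + Finsupp.single i 1 : σ),
      ((x.2 i : ℕ) : k) * (p x.1 * q x.2) = (p * pderiv i q) m := by
    rw [sum_swap_antidiagonal (m + Finsupp.single i 1) (fun a b => ((b i : ℕ) : k) * (p a * q b))]
    rw [sum_shift i m (fun a b => p b * q a)]
    rw [sum_swap_antidiagonal m
      (fun a b => ((a i + 1 : ℕ) : k) * (p b * q (a + Finsupp.single i 1)))]
    rw [mul_apply]
    apply Finset.sum_congr rfl
    intro y _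
    rw [pd_apply]; ring
  rw [e1, e2]
  rfl

end GradAux

namespace GradAux
variable {k : Type} [Field k] {n : ℕ}

local notation "S" => MvPowerSeries (Fin (n+1)) k
local notation "σ" => (Fin (n+1) →₀ ℕ)

lemma w_right_le {u v M : Fin (n+1) →₀ ℕ} (h : u + v = M) : w v ≤ w M := by
  rw [← h, w_add]; omega

lemma w_sub_lt {m : Fin (n+1) →₀ ℕ} {i : Fin (n+1)} (hi : i ≠ 0) (hmi : m i ≠ 0) :
    w (m - Finsupp.single i 1) < w m := by
  have h1 : m - Finsupp.single i 1 + Finsupp.single i 1 = m := fsub_add_cancel hmi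
  have h2 := w_add (m - Finsupp.single i 1) (Finsupp.single i 1)
  rw [h1, w_single hi] at h2
  omega

noncomputable def pick (m : Fin (n+1) →₀ ℕ) (h : w m ≠ 0) : Fin (n+1) :=
  (exists_ne_zero_of_w_ne_zero h).choose

lemma pick_ne_zero (m : Fin (n+1) →₀ ℕ) (h : w m ≠ 0) : pick m h ≠ 0 :=
  (exists_ne_zero_of_w_ne_zero h).choose_spec.1

lemma pick_pos (m : Fin (n+1) →₀ ℕ) (h : w m ≠ 0) : m (pick m h) ≠ 0 :=
  (exists_ne_zero_of_w_ne_zero h).choose_spec.2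

noncomputable def phi (q : Fin (n+1) → MvPowerSeries (Fin (n+1)) k)
    (m : Fin (n+1) →₀ ℕ) : k :=
  if h : w m = 0 then (if m = Finsupp.single 0 1 then 1 else 0)
  else
    ((m (pick m h) : ℕ) : k)⁻¹ *
      ∑ x ∈ (Finset.HasAntidiagonal.antidiagonal (m - Finsupp.single (pick m h) 1 : Fin (n+1) →₀ ℕ)).attach,
        q (pick m h) x.1.1 * (((x.1.2 0 + 1 : ℕ) : k) * phi q (x.1.2 + Finsupp.single 0 1))
termination_by w m
decreasing_by
  have hmem := Finset.HasAntidiagonal.mem_antidiagonal.mp x.2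
  have h1 : w (x.1.2 + Finsupp.single (0 : Fin (n+1)) 1) = w x.1.2 := by
    rw [w_add, w_single_zero]; omega
  have h2 : w x.1.2 ≤ w (m - Finsupp.single (pick m h) 1) := w_right_le hmem
  have h3 : w (m - Finsupp.single (pick m h) 1) < w m :=
    w_sub_lt (pick_ne_zero m h) (pick_pos m h)
  omega

lemma phi_base (q : Fin (n+1) → S) {m : Fin (n+1) →₀ ℕ} (h : w m = 0) :
    phi q m = if m = Finsupp.single 0 1 then 1 else 0 := by
  rw [phi, dif_pos h]

lemma phi_step (q : Fin (n+1) → S) {m : Fin (n+1) →₀ ℕ} (h : w m ≠ 0) :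
    phi q m = ((m (pick m h) : ℕ) : k)⁻¹ *
      (q (pick m h) * pderiv 0 (phi q)) (m - Finsupp.single (pick m h) 1) := by
  rw [phi, dif_neg h, mul_apply]
  congr 1
  rw [Finset.sum_attach (Finset.HasAntidiagonal.antidiagonal (m - Finsupp.single (pick m h) 1 : Fin (n+1) →₀ ℕ))
    (fun x => q (pick m h) x.1 * (((x.2 0 + 1 : ℕ) : k) * phi q (x.2 + Finsupp.single 0 1)))]
  apply Finset.sum_congr rfl
  intro x _
  erw [pd_apply]

variable [CharZero k]

theorem phi_pde (q : Fin (n+1) → S)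
    (hsym : ∀ i j : Fin (n+1), i ≠ 0 → j ≠ 0 →
      pderiv j (q i) + q i * pderiv 0 (q j) = pderiv i (q j) + q j * pderiv 0 (q i)) :
    ∀ i : Fin (n+1), i ≠ 0 → pderiv i (phi q) = q i * pderiv 0 (phi q) := by
  suffices key : ∀ s (m : Fin (n+1) →₀ ℕ), w m < s → ∀ i, i ≠ 0 →
      pderiv i (phi q) m = (q i * pderiv 0 (phi q)) m by
    intro i hi; funext m; exact key (w m + 1) m (Nat.lt_succ_self _) i hi
  intro s
  induction s with
  | zero => intro m hm; omega
  | succ s IH =>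
    intro m hm i hi
    rcases Nat.lt_or_ge (w m) s with hlt | hge
    · exact IH m hlt i hi
    have hws : w m = s := by omega
    set P := pderiv 0 (phi q) with hP
    set M := m + Finsupp.single i 1 with hM
    have hwM : w M ≠ 0 := by rw [hM, w_add, w_single hi]; omega
    have hstep := phi_step q hwM
    erw [pd_apply]
    rcases eq_or_ne (pick M hwM) i with heq | hne
    · -- the chosen index is i itself
      rw [heq] at hstep
      rw [← hP] at hstep
      have hMi : M i = m i + 1 := by
        simp [hM, Finsupp.add_apply, Finsupp.single_apply]
      rw [hstep, hMi, hM, fadd_sub_cancel]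
      have hnz : ((m i + 1 : ℕ) : k) ≠ 0 := Nat.cast_ne_zero.mpr (by omega)
      rw [mul_inv_cancel_left₀ hnz]
    · -- different index: use compatibility
      set i₀ := pick M hwM with hi₀def
      have hi₀ : i₀ ≠ 0 := pick_ne_zero M hwM
      have hMi₀ : M i₀ ≠ 0 := pick_pos M hwM
      have hmi₀ : m i₀ ≠ 0 := by
        have : M i₀ = m i₀ := by
          simp [hM, Finsupp.add_apply, Finsupp.single_apply, Ne.symm hne]
        omega
      set m' := m - Finsupp.single i₀ 1 with hm'
      have hm'add : m' + Finsupp.single i₀ 1 = m := fsub_add_cancel hmi₀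
      have hMsub : M - Finsupp.single i₀ 1 = m' + Finsupp.single i 1 := by
        rw [hM, hm']
        ext j
        simp only [Finsupp.tsub_apply, Finsupp.add_apply, Finsupp.single_apply]
        rcases eq_or_ne i₀ j with rfl | h1
        · rw [if_neg (Ne.symm hne)]
          omega
        · rw [if_neg h1]; omega
      have hwm' : w m' < w m := w_sub_lt hi₀ hmi₀
      -- vanishing of correction terms
      have hD0 : ∀ j : Fin (n+1), j ≠ 0 → ∀ A : S,
          (A * pderiv 0 (pderiv j (phi q) - q j * P)) m' = 0 := by
        intro j hj A
        rw [mul_apply]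
        apply Finset.sum_eq_zero
        rintro ⟨u, v⟩ hx
        have hv : w v ≤ w m' := w_right_le (Finset.HasAntidiagonal.mem_antidiagonal.mp hx)
        have hwv : w (v + Finsupp.single (0 : Fin (n+1)) 1) < s := by
          rw [w_add, w_single_zero]; omega
        have hzero : (pderiv j (phi q) - q j * P) (v + Finsupp.single 0 1) = 0 := by
          have := IH (v + Finsupp.single 0 1) hwv j hj
          show pderiv j (phi q) (v + Finsupp.single 0 1)
            - (q j * P) (v + Finsupp.single 0 1) = 0
          rw [this]; ring
        rw [pd_apply, hzero]
        ring
      -- the series-level identity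
      have hgen : ∀ j : Fin (n+1), j ≠ 0 → pderiv j P
          = pderiv 0 (q j) * P + q j * pderiv 0 P + pderiv 0 (pderiv j (phi q) - q j * P) := by
        intro j hj
        erw [hP, pd_comm j 0, pd_sub, pd_mul]
        ring
      have hser : pderiv i (q i₀ * P) = pderiv i₀ (q i * P)
          + (q i₀ * pderiv 0 (pderiv i (phi q) - q i * P)
             - q i * pderiv 0 (pderiv i₀ (phi q) - q i₀ * P)) := by
        rw [pd_mul, pd_mul, hgen i hi, hgen i₀ hi₀]
        linear_combination -(hsym i i₀ hi hi₀) * P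
      have hcoeff : (pderiv i (q i₀ * P)) m' = (pderiv i₀ (q i * P)) m' := by
        have := congrFun hser m'
        rw [show (pderiv i₀ (q i * P)
            + (q i₀ * pderiv 0 (pderiv i (phi q) - q i * P)
               - q i * pderiv 0 (pderiv i₀ (phi q) - q i₀ * P))) m'
          = (pderiv i₀ (q i * P)) m'
            + ((q i₀ * pderiv 0 (pderiv i (phi q) - q i * P)) m'
               - (q i * pderiv 0 (pderiv i₀ (phi q) - q i₀ * P)) m') from rfl] at this
        rw [hD0 i hi (q i₀), hD0 i₀ hi₀ (q i)] at this
        simpa using this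
      -- arithmetic conclusion
      have hm'i : m' i = m i := fsub_apply_ne (fun h => hne h.symm)
      have hm'i₀ : m' i₀ + 1 = m i₀ := by
        rw [hm', fsub_apply_self]; omega
      have hA : ((m' i + 1 : ℕ) : k) * (q i₀ * P) (m' + Finsupp.single i 1)
          = pderiv i (q i₀ * P) m' := (pd_apply _ _ _).symm
      have hB : ((m' i₀ + 1 : ℕ) : k) * (q i * P) (m' + Finsupp.single i₀ 1)
          = pderiv i₀ (q i * P) m' := (pd_apply _ _ _).symm
      rw [← hP] at hstep
      rw [hstep, hMsub]
      rw [show M i₀ = m i₀ by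
        simp [hM, Finsupp.add_apply, Finsupp.single_apply, Ne.symm hne]]
      rw [show (q i * P) m = (q i * P) (m' + Finsupp.single i₀ 1) by rw [hm'add]]
      have hkey : ((m i + 1 : ℕ) : k) * (q i₀ * P) (m' + Finsupp.single i 1)
          = ((m i₀ : ℕ) : k) * (q i * P) (m' + Finsupp.single i₀ 1) := by
        rw [← hm'i, ← hm'i₀, hA, hB]
        exact hcoeff
      have hnz : ((m i₀ : ℕ) : k) ≠ 0 := Nat.cast_ne_zero.mpr hmi₀
      field_simp
      push_cast at hkey ⊢
      linear_combination hkey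

theorem first_integral_unique (q : Fin (n+1) → S) (G : S)
    (hG : ∀ i : Fin (n+1), i ≠ 0 → pderiv i G = q i * pderiv 0 G)
    (h0 : ∀ a : ℕ, G (Finsupp.single 0 a) = 0) : G = 0 := by
  funext m
  show G m = 0
  suffices key : ∀ s (m : Fin (n+1) →₀ ℕ), w m ≤ s → G m = 0 by
    exact key (w m) m le_rfl
  intro s
  induction s with
  | zero =>
    intro m hm
    have h := eq_single_of_w_eq_zero (Nat.le_zero.mp hm)
    rw [h]; exact h0 _
  | succ s IH =>
    intro m hm
    rcases Nat.lt_or_ge s (w m) with hgt | hle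
    swap
    · exact IH m hle
    have hw : w m ≠ 0 := by omega
    obtain ⟨i, hi, hmi⟩ := exists_ne_zero_of_w_ne_zero hw
    have h1 := congrFun (hG i hi) (m - Finsupp.single i 1)
    rw [pd_apply, fsub_add_cancel hmi] at h1
    have h2 : (q i * pderiv 0 G) (m - Finsupp.single i 1) = 0 := by
      rw [mul_apply]
      apply Finset.sum_eq_zero
      rintro ⟨u, v⟩ hx
      have hv : w v ≤ w (m - Finsupp.single i 1) :=
        w_right_le (Finset.HasAntidiagonal.mem_antidiagonal.mp hx)
      have hlt : w (m - Finsupp.single i 1) < w m := w_sub_lt hi hmi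
      have : G (v + Finsupp.single 0 1) = 0 := by
        apply IH
        rw [w_add, w_single_zero]
        omega
      rw [pd_apply, this]
      ring
    rw [h2] at h1
    have hnz : ((((m - Finsupp.single i 1 : Fin (n+1) →₀ ℕ)) i + 1 : ℕ) : k) ≠ 0 :=
      Nat.cast_ne_zero.mpr (by omega)
    rcases mul_eq_zero.mp h1 with h | h
    · exact absurd h hnz
    · exact h

end GradAux

namespace GradAux
variable {k : Type} [Field k] {n : ℕ}

local notation "S" => MvPowerSeries (Fin (n+1)) k
local notation "σ" => (Fin (n+1) →₀ ℕ)

lemma coeff_one_apply (m : σ) : (1 : S) m = if m = 0 then 1 else 0 := by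
  classical
  simpa [MvPowerSeries.coeff_apply] using (MvPowerSeries.coeff_one (n := m) (R := k))

lemma pd_one (i : Fin (n+1)) : pderiv i (1 : S) = 0 := by
  funext m
  rw [pd_apply, coeff_one_apply]
  have : m + Finsupp.single i 1 ≠ 0 := by
    intro h
    have := DFunLike.congr_fun h i
    simp [Finsupp.add_apply, Finsupp.single_apply] at this
  rw [if_neg this]
  show ((m i + 1 : ℕ) : k) * 0 = (0 : k)
  ring

lemma smul_apply' (c : k) (A : S) (m : σ) : (c • A) m = c * A m := rfl

lemma pd_pow_succ (i : Fin (n+1)) (p : S) : ∀ a : ℕ,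
    pderiv i (p ^ (a + 1)) = ((a + 1 : ℕ) : k) • (p ^ a * pderiv i p) := by
  intro a
  induction a with
  | zero => simp [pd_apply]
  | succ a IH =>
    rw [pow_succ, pd_mul, IH, smul_mul_assoc]
    have h1 : p ^ (a + 1) * pderiv i p = p ^ a * pderiv i p * p := by ring
    rw [← h1]
    push_cast
    module

lemma deg_single (i : Fin (n+1)) (c : ℕ) : deg (Finsupp.single i c) = c := by
  rw [deg, Finset.sum_eq_single i]
  · simp
  · intro j _ hji; simp [Finsupp.single_apply, Ne.symm hji]
  · intro h; exact absurd (Finset.mem_univ i) h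

lemma deg_left_le {u v M : σ} (h : u + v = M) : deg u ≤ deg M := by
  rw [← h, deg_add]; omega

lemma pow_vanish {p : S} (hp : p 0 = 0) : ∀ (j : ℕ) (m : σ), deg m < j → (p ^ j) m = 0 := by
  intro j
  induction j with
  | zero => intro m hm; omega
  | succ j IH =>
    intro m hm
    rw [pow_succ, mul_apply]
    apply Finset.sum_eq_zero
    rintro ⟨u, v⟩ hx
    have hx' := Finset.HasAntidiagonal.mem_antidiagonal.mp hx
    have hdeg : deg u + deg v = deg m := by rw [← deg_add, hx']
    rcases Nat.lt_or_ge (deg u) j with h | h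
    · rw [IH u h]; ring
    · have hv : deg v = 0 := by omega
      have : v = 0 := deg_eq_zero_iff.mp hv
      rw [this, hp]; ring

lemma single0_split {a : ℕ} {u v : Fin (n+1) →₀ ℕ} (h : u + v = Finsupp.single 0 a) :
    u = Finsupp.single 0 (u 0) ∧ v = Finsupp.single 0 (v 0) := by
  constructor <;> ext j <;> rcases eq_or_ne j 0 with rfl | hj
  · simp
  · have := DFunLike.congr_fun h j
    simp only [Finsupp.add_apply, Finsupp.single_apply, Ne.symm hj, if_false] at this ⊢
    omega
  · simp
  · have := DFunLike.congr_fun h j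
    simp only [Finsupp.add_apply, Finsupp.single_apply, Ne.symm hj, if_false] at this ⊢
    omega

/-- restriction to the x₀ axis, as a ring homomorphism to power series in one variable -/
noncomputable def rho : MvPowerSeries (Fin (n+1)) k →+* PowerSeries k where
  toFun p := PowerSeries.mk fun a => p (Finsupp.single 0 a)
  map_one' := by
    ext a
    rw [PowerSeries.coeff_mk, PowerSeries.coeff_one, coeff_one_apply]
    simp [Finsupp.single_eq_zero]
  map_mul' p q := by
    ext a
    rw [PowerSeries.coeff_mk, PowerSeries.coeff_mul, mul_apply]
    apply Finset.sum_nbij' (fun x => (x.1 0, x.2 0))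
      (fun y => (Finsupp.single 0 y.1, Finsupp.single 0 y.2))
    · rintro ⟨u, v⟩ hx
      have hx' := Finset.HasAntidiagonal.mem_antidiagonal.mp hx
      rw [Finset.HasAntidiagonal.mem_antidiagonal]
      have := DFunLike.congr_fun hx' 0
      simpa [Finsupp.add_apply, Finsupp.single_apply] using this
    · rintro ⟨b, c⟩ hx
      have hx' := Finset.HasAntidiagonal.mem_antidiagonal.mp hx
      rw [Finset.HasAntidiagonal.mem_antidiagonal]
      rw [← Finsupp.single_add]
      simp only
      rw [hx']
    · rintro ⟨u, v⟩ hx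
      obtain ⟨hu, hv⟩ := single0_split (Finset.HasAntidiagonal.mem_antidiagonal.mp hx)
      simp only
      rw [← hu, ← hv]
    · rintro ⟨b, c⟩ _
      simp [Finsupp.single_eq_same]
    · rintro ⟨u, v⟩ hx
      obtain ⟨hu, hv⟩ := single0_split (Finset.HasAntidiagonal.mem_antidiagonal.mp hx)
      simp only
      rw [PowerSeries.coeff_mk, PowerSeries.coeff_mk, ← hu, ← hv]
  map_zero' := by
    ext a
    rw [PowerSeries.coeff_mk]
    show (0 : k) = _
    simp
  map_add' p q := by
    ext a
    rw [PowerSeries.coeff_mk]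
    show p (Finsupp.single 0 a) + q (Finsupp.single 0 a) = _
    rw [map_add]
    rw [PowerSeries.coeff_mk, PowerSeries.coeff_mk]

lemma rho_coeff (p : S) (a : ℕ) : PowerSeries.coeff a (rho p) = p (Finsupp.single 0 a) := by
  have h : rho p = PowerSeries.mk fun a => p (Finsupp.single 0 a) := rfl
  rw [h, PowerSeries.coeff_mk]

end GradAux

namespace GradAux
variable {k : Type} [Field k] {n : ℕ}

local notation "S" => MvPowerSeries (Fin (n+1)) k
local notation "σ" => (Fin (n+1) →₀ ℕ)

/-- substitution of `ψ` into a one-variable power series -/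
noncomputable def sub0 (ψ : S) (P : PowerSeries k) : S :=
  fun m => ∑ j ∈ Finset.range (deg m + 1), PowerSeries.coeff j P * (ψ ^ j) m

lemma sub0_ext {ψ : S} (hψ : ψ 0 = 0) (P : PowerSeries k) (m : σ) {N : ℕ} (hN : deg m < N) :
    sub0 ψ P m = ∑ j ∈ Finset.range N, PowerSeries.coeff j P * (ψ ^ j) m := by
  show ∑ j ∈ Finset.range (deg m + 1), PowerSeries.coeff j P * (ψ ^ j) m = _
  apply Finset.sum_subset
  · exact Finset.range_subset_range.mpr (by omega)
  · intro j _ hj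
    rw [Finset.mem_range] at hj
    rw [pow_vanish hψ j m (by omega)]
    ring

lemma sub0_zero (ψ : S) : sub0 ψ 0 = 0 := by
  funext m
  show ∑ j ∈ Finset.range (deg m + 1), PowerSeries.coeff j 0 * (ψ ^ j) m = (0 : S) m
  rw [show (0 : S) m = 0 from rfl]
  apply Finset.sum_eq_zero
  intro j _
  rw [map_zero]
  ring

lemma coeff_derivativeFun' (f : PowerSeries k) (t : ℕ) :
    PowerSeries.coeff t f.derivativeFun = PowerSeries.coeff (t + 1) f * (t + 1) :=
  PowerSeries.coeff_derivative f t

lemma sub0_pd {ψ : S} (hψ : ψ 0 = 0) (i : Fin (n+1)) (P : PowerSeries k) :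
    pderiv i (sub0 ψ P) = sub0 ψ (PowerSeries.derivativeFun P) * pderiv i ψ := by
  funext m
  rw [pd_apply]
  have hdeg : deg (m + Finsupp.single i 1) = deg m + 1 := by rw [deg_add, deg_single]
  rw [sub0_ext hψ P (m + Finsupp.single i 1) (N := deg m + 2) (by omega), Finset.mul_sum]
  have step1 : ∀ j ∈ Finset.range (deg m + 2),
      ((m i + 1 : ℕ) : k) * (PowerSeries.coeff j P * (ψ ^ j) (m + Finsupp.single i 1))
        = PowerSeries.coeff j P * (pderiv i (ψ ^ j)) m := by
    intro j _
    rw [pd_apply]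
    ring
  rw [Finset.sum_congr rfl step1, Finset.sum_range_succ']
  have hzero : PowerSeries.coeff 0 P * (pderiv i (ψ ^ 0)) m = 0 := by
    rw [pow_zero, pd_one]
    rw [show (0 : S) m = 0 from rfl]
    ring
  rw [hzero, add_zero]
  have step2 : ∀ a ∈ Finset.range (deg m + 1),
      PowerSeries.coeff (a + 1) P * (pderiv i (ψ ^ (a + 1))) m
        = PowerSeries.coeff a (PowerSeries.derivativeFun P) * ((ψ ^ a * pderiv i ψ) m) := by
    intro a _
    rw [pd_pow_succ, smul_apply', coeff_derivativeFun']
    push_cast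
    ring
  rw [Finset.sum_congr rfl step2]
  -- now the right-hand side
  rw [mul_apply]
  have step3 : ∀ x ∈ Finset.HasAntidiagonal.antidiagonal m,
      sub0 ψ (PowerSeries.derivativeFun P) x.1 * pderiv i ψ x.2
        = ∑ a ∈ Finset.range (deg m + 1),
            PowerSeries.coeff a (PowerSeries.derivativeFun P) * ((ψ ^ a) x.1 * pderiv i ψ x.2) := by
    intro x hx
    have hle : deg x.1 < deg m + 1 := by
      have := deg_left_le (Finset.HasAntidiagonal.mem_antidiagonal.mp hx)
      omega
    rw [sub0_ext hψ _ x.1 hle, Finset.sum_mul]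
    apply Finset.sum_congr rfl
    intro a _
    ring
  rw [Finset.sum_congr rfl step3, Finset.sum_comm]
  apply Finset.sum_congr rfl
  intro a _
  rw [mul_apply, Finset.mul_sum]

lemma sub0_rho {ψ : S} (hψ : ψ 0 = 0) (hρ : rho ψ = PowerSeries.X) (P : PowerSeries k) :
    rho (sub0 ψ P) = P := by
  ext a
  rw [rho_coeff]
  rw [sub0_ext hψ P (Finsupp.single 0 a) (N := a + 1) (by rw [deg_single]; omega)]
  have hpow : ∀ j, (ψ ^ j) (Finsupp.single 0 a) = if a = j then 1 else 0 := by
    intro j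
    have h := rho_coeff (ψ ^ j) a
    rw [map_pow, hρ, PowerSeries.coeff_X_pow] at h
    exact h.symm
  rw [Finset.sum_eq_single_of_mem a (Finset.self_mem_range_succ a)]
  · rw [hpow, if_pos rfl, mul_one]
  · intro j _ hja
    rw [hpow, if_neg (fun h => hja h.symm)]
    ring

lemma derivFun_X : (PowerSeries.X : PowerSeries k).derivativeFun = 1 := by
  ext t
  rw [coeff_derivativeFun', PowerSeries.coeff_X, PowerSeries.coeff_one]
  rcases eq_or_ne t 0 with rfl | ht
  · simp
  · rw [if_neg (by omega), if_neg ht]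
    ring

lemma derivFun_X_pow (b : ℕ) :
    ((PowerSeries.X : PowerSeries k) ^ (b + 1)).derivativeFun
      = PowerSeries.C ((b + 1 : ℕ) : k) * PowerSeries.X ^ b := by
  induction b with
  | zero => simp [pow_one, derivFun_X]
  | succ b IH =>
    rw [pow_succ, PowerSeries.derivativeFun_mul, IH, derivFun_X]
    have hC : (PowerSeries.C ((b + 2 : ℕ) : k))
        = PowerSeries.C ((b + 1 : ℕ) : k) + 1 := by
      rw [← map_one (PowerSeries.C (R := k)), ← map_add]
      congr 1
      push_cast
      ring
    rw [show b + 1 + 1 = b + 2 from rfl, hC]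
    simp only [smul_eq_mul]
    ring

variable [CharZero k]

lemma onevar {F : PowerSeries k} (hF : F ≠ 0) (h0 : PowerSeries.constantCoeff F = 0) :
    ∃ r : PowerSeries k, F = F.derivativeFun * r := by
  classical
  have hex : ∃ a, PowerSeries.coeff a F ≠ 0 := by
    by_contra hc
    push_neg at hc
    exact hF (PowerSeries.ext fun a => by rw [hc]; simp)
  have haF : PowerSeries.coeff (Nat.find hex) F ≠ 0 := Nat.find_spec hex
  have hmin : ∀ b, b < Nat.find hex → PowerSeries.coeff b F = 0 :=
    fun b hb => not_not.mp (Nat.find_min hex hb)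
  have ha0 : Nat.find hex ≠ 0 := by
    intro h
    apply haF
    rw [h]
    rw [show (PowerSeries.coeff 0) F = PowerSeries.constantCoeff F from
      congrFun (PowerSeries.coeff_zero_eq_constantCoeff (R := k)) F]
    exact h0
  obtain ⟨b, hab⟩ : ∃ b, Nat.find hex = b + 1 := ⟨Nat.find hex - 1, by omega⟩
  set u : PowerSeries k := PowerSeries.mk fun t => PowerSeries.coeff (t + (b + 1)) F with hu
  have hXu : PowerSeries.X ^ (b + 1) * u = F := by
    ext t
    rcases Nat.lt_or_ge t (b + 1) with ht | ht
    · have h1 : PowerSeries.coeff t (PowerSeries.X ^ (b + 1) * u) = 0 := by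
        rw [PowerSeries.coeff_mul]
        apply Finset.sum_eq_zero
        rintro ⟨x, y⟩ hxy
        have := Finset.HasAntidiagonal.mem_antidiagonal.mp hxy
        rw [PowerSeries.coeff_X_pow, if_neg (by omega)]
        ring
      rw [h1, hmin t (by omega)]
    · obtain ⟨d, rfl⟩ : ∃ d, t = d + (b + 1) := ⟨t - (b + 1), by omega⟩
      rw [PowerSeries.coeff_X_pow_mul, hu, PowerSeries.coeff_mk]
  set W := PowerSeries.C ((b + 1 : ℕ) : k) * u + PowerSeries.X * u.derivativeFun with hW
  have hdF : F.derivativeFun = PowerSeries.X ^ b * W := by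
    rw [← hXu, PowerSeries.derivativeFun_mul, derivFun_X_pow, hW]
    simp only [smul_eq_mul]
    ring
  have hu0 : PowerSeries.constantCoeff u ≠ 0 := by
    have h1 : PowerSeries.constantCoeff u = PowerSeries.coeff (b + 1) F := by
      rw [← congrFun (PowerSeries.coeff_zero_eq_constantCoeff (R := k)) u, hu,
        PowerSeries.coeff_mk, zero_add]
    rw [h1, ← hab]
    exact haF
  have hWu : IsUnit W := by
    rw [PowerSeries.isUnit_iff_constantCoeff]
    rw [hW, map_add, map_mul, map_mul, PowerSeries.constantCoeff_C,
      PowerSeries.constantCoeff_X, zero_mul, add_zero]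
    apply isUnit_iff_ne_zero.mpr
    apply mul_ne_zero _ hu0
    exact Nat.cast_ne_zero.mpr (by omega)
  obtain ⟨V, hV⟩ := hWu.exists_right_inv
  refine ⟨V * PowerSeries.X * u, ?_⟩
  rw [hdF, ← hXu]
  have : PowerSeries.X ^ b * W * (V * PowerSeries.X * u)
      = PowerSeries.X ^ b * PowerSeries.X * u * (W * V) := by ring
  rw [this, hV, mul_one, pow_succ]

end GradAux

open GradAux

theorem stmt_15 {k : Type} [Field k] [CharZero k] {n : ℕ}
    (f : MvPowerSeries (Fin (n + 1)) k) (hnu : ¬ IsUnit f)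
    (hne : pderiv 0 f ≠ 0)
    (hprinc : gradIdeal f = Ideal.span {pderiv 0 f}) :
    f ∈ Ideal.span {pderiv 0 f} := by
  classical
  have hq : ∀ i : Fin (n+1), ∃ qi : MvPowerSeries (Fin (n+1)) k,
      pderiv i f = qi * pderiv 0 f := by
    intro i
    have hmem : pderiv i f ∈ gradIdeal f := Ideal.subset_span ⟨i, rfl⟩
    rw [hprinc, Ideal.mem_span_singleton] at hmem
    obtain ⟨c, hc⟩ := hmem
    exact ⟨c, by rw [hc]; ring⟩
  choose q hq using hq
  have hsym : ∀ i j : Fin (n+1), i ≠ 0 → j ≠ 0 →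
      pderiv j (q i) + q i * pderiv 0 (q j) = pderiv i (q j) + q j * pderiv 0 (q i) := by
    intro i j hi hj
    have hg : ∀ l : Fin (n+1), pderiv l (pderiv 0 f)
        = pderiv 0 (q l) * pderiv 0 f + q l * pderiv 0 (pderiv 0 f) := by
      intro l
      rw [pd_comm l 0, hq l, pd_mul]
    have h1 : pderiv j (pderiv i f)
        = pderiv j (q i) * pderiv 0 f
          + q i * (pderiv 0 (q j) * pderiv 0 f + q j * pderiv 0 (pderiv 0 f)) := by
      rw [hq i, pd_mul, hg j]
    have h2 : pderiv i (pderiv j f)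
        = pderiv i (q j) * pderiv 0 f
          + q j * (pderiv 0 (q i) * pderiv 0 f + q i * pderiv 0 (pderiv 0 f)) := by
      rw [hq j, pd_mul, hg i]
    have h3 : pderiv j (pderiv i f) = pderiv i (pderiv j f) := pd_comm j i f
    have h4 : (pderiv j (q i) + q i * pderiv 0 (q j)
        - (pderiv i (q j) + q j * pderiv 0 (q i))) * pderiv 0 f = 0 := by
      linear_combination h3 - h1 + h2
    rcases mul_eq_zero.mp h4 with h | h
    · exact sub_eq_zero.mp h
    · exact absurd h hne
  have hpde := phi_pde q hsym
  have hφ0 : phi q 0 = 0 := by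
    rw [phi_base q (by simp [w])]
    have hne0 : (0 : Fin (n+1) →₀ ℕ) ≠ Finsupp.single 0 1 := by
      intro h
      have h2 := DFunLike.congr_fun h 0
      simp at h2
    rw [if_neg hne0]
  have hρφ : rho (phi q) = PowerSeries.X := by
    ext a
    erw [rho_coeff, phi_base q (w_single_zero a), PowerSeries.coeff_X]
    rcases eq_or_ne a 1 with rfl | ha
    · rw [if_pos rfl, if_pos rfl]
    · rw [if_neg (fun h => ha (Finsupp.single_injective 0 h)), if_neg ha]
  set P := pderiv 0 (phi q) with hP
  have hPc : P 0 = 1 := by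
    erw [hP, pd_apply]
    have h1 : (0 : Fin (n+1) →₀ ℕ) + Finsupp.single 0 1 = Finsupp.single 0 1 := zero_add _
    rw [h1, phi_base q (w_single_zero 1), if_pos rfl]
    simp
  have hPunit : IsUnit P := by
    rw [MvPowerSeries.isUnit_iff_constantCoeff]
    have h1 : MvPowerSeries.constantCoeff P = P 0 := rfl
    rw [h1, hPc]
    exact isUnit_one
  set F := rho f with hF
  have hfeq : f = sub0 (phi q) F := by
    have hdiff : f - sub0 (phi q) F = 0 := by
      apply first_integral_unique q
      · intro i hi
        rw [pd_sub, pd_sub, sub0_pd hφ0, sub0_pd hφ0, hq i, hpde i hi]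
        ring
      · intro a
        have h1 : (f - sub0 (phi q) F) (Finsupp.single 0 a)
            = f (Finsupp.single 0 a) - sub0 (phi q) F (Finsupp.single 0 a) := rfl
        have h2 := rho_coeff (sub0 (phi q) F) a
        rw [sub0_rho hφ0 hρφ] at h2
        rw [h1, ← h2, hF, rho_coeff]
        ring
    have := sub_eq_zero.mp hdiff
    exact this
  by_cases hF0 : F = 0
  · erw [hfeq, hF0, sub0_zero]
    exact Submodule.zero_mem _
  · have hfc : MvPowerSeries.constantCoeff f = 0 := by
      by_contra hcc
      exact hnu (MvPowerSeries.isUnit_iff_constantCoeff.mpr (isUnit_iff_ne_zero.mpr hcc))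
    have hc0 : PowerSeries.constantCoeff F = 0 := by
      rw [← congrFun (PowerSeries.coeff_zero_eq_constantCoeff (R := k)) F, hF, rho_coeff,
        Finsupp.single_zero]
      exact hfc
    obtain ⟨r, hr⟩ := onevar hF0 hc0
    have hFI_sub0 : ∀ Q : PowerSeries k, ∀ i : Fin (n+1), i ≠ 0 →
        pderiv i (sub0 (phi q) Q) = q i * pderiv 0 (sub0 (phi q) Q) := by
      intro Q i hi
      rw [sub0_pd hφ0, sub0_pd hφ0, hpde i hi]
      ring
    have hsplit : sub0 (phi q) F
        = sub0 (phi q) F.derivativeFun * sub0 (phi q) r := by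
      have hdiff : sub0 (phi q) F
          - sub0 (phi q) F.derivativeFun * sub0 (phi q) r = 0 := by
        apply first_integral_unique q
        · intro i hi
          rw [pd_sub, pd_mul, hFI_sub0 F i hi, hFI_sub0 F.derivativeFun i hi,
            hFI_sub0 r i hi, pd_sub, pd_mul]
          ring
        · intro a
          have h1 : (sub0 (phi q) F
              - sub0 (phi q) F.derivativeFun * sub0 (phi q) r) (Finsupp.single 0 a)
            = sub0 (phi q) F (Finsupp.single 0 a)
              - (sub0 (phi q) F.derivativeFun * sub0 (phi q) r) (Finsupp.single 0 a) := rfl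
          have h2 := rho_coeff (sub0 (phi q) F.derivativeFun * sub0 (phi q) r) a
          rw [map_mul, sub0_rho hφ0 hρφ, sub0_rho hφ0 hρφ] at h2
          have h3 := rho_coeff (sub0 (phi q) F) a
          rw [sub0_rho hφ0 hρφ] at h3
          rw [h1, ← h2, ← h3, ← hr]
          ring
      exact sub_eq_zero.mp hdiff
    have hg2 : pderiv 0 f = sub0 (phi q) F.derivativeFun * P := by
      conv_lhs => rw [hfeq]
      rw [hP, sub0_pd hφ0 0 F]
    rw [Ideal.mem_span_singleton]
    obtain ⟨V, hV⟩ := hPunit.exists_right_inv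
    refine ⟨V * sub0 (phi q) r, ?_⟩
    rw [hg2, hfeq, hsplit]
    have h5 : sub0 (phi q) F.derivativeFun * P * (V * sub0 (phi q) r)
        = sub0 (phi q) F.derivativeFun * sub0 (phi q) r * (P * V) := by ring
    rw [h5, hV, mul_one]
end
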